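/- arXiv:1803.08558 — 3 statements merged into one kernel-verified Lean document; each statement's English description precedes it below -/
import Mathlib

section
/- Let m, n be positive integers, G a real m×n matrix, a ∈ ℝ^m, k ∈ ℝ^n, and λ ≥ 0. Then the supremum, over all real m×n matrices Δ with Frobenius norm ‖Δ‖_F ≤ λ, of the Euclidean norm ‖(G + Δ)k − a‖₂ equals ‖Gk − a‖₂ + λ‖k‖₂. -/
open scoped BigOperators

/-- Frobenius norm of a real matrix: `‖M‖_F = sqrt (∑ i j, M i j ^ 2)`. -/
noncomputable def frobeniusNorm {m n : ℕ} (M : Matrix (Fin m) (Fin n) ℝ) : ℝ :=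
  Real.sqrt (∑ i, ∑ j, (M i j) ^ 2)

/-- Euclidean norm of a real vector. -/
noncomputable def euclNorm {m : ℕ} (v : Fin m → ℝ) : ℝ :=
  Real.sqrt (∑ i, (v i) ^ 2)

lemma euclNorm_nonneg {m : ℕ} (v : Fin m → ℝ) : 0 ≤ euclNorm v := Real.sqrt_nonneg _

lemma sq_euclNorm {m : ℕ} (v : Fin m → ℝ) : euclNorm v ^ 2 = ∑ i, v i ^ 2 :=
  Real.sq_sqrt (Finset.sum_nonneg fun i _ => sq_nonneg _)

lemma euclNorm_eq_norm {m : ℕ} (v : Fin m → ℝ) :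
    euclNorm v = ‖(WithLp.equiv 2 (Fin m → ℝ)).symm v‖ := by
  rw [EuclideanSpace.norm_eq]
  simp [euclNorm, sq_abs]

lemma euclNorm_add_le {m : ℕ} (x y : Fin m → ℝ) :
    euclNorm (x + y) ≤ euclNorm x + euclNorm y := by
  rw [euclNorm_eq_norm, euclNorm_eq_norm, euclNorm_eq_norm]
  exact norm_add_le ((WithLp.equiv 2 (Fin m → ℝ)).symm x) ((WithLp.equiv 2 (Fin m → ℝ)).symm y)

lemma euclNorm_mulVec_le {m n : ℕ} (Δ : Matrix (Fin m) (Fin n) ℝ) (k : Fin n → ℝ) :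
    euclNorm (Δ.mulVec k) ≤ frobeniusNorm Δ * euclNorm k := by
  rw [euclNorm, frobeniusNorm, euclNorm, ← Real.sqrt_mul (by positivity)]
  apply Real.sqrt_le_sqrt
  rw [Finset.sum_mul]
  apply Finset.sum_le_sum
  intro i _
  calc (Δ.mulVec k i)^2 = (∑ j, Δ i j * k j)^2 := by rw [Matrix.mulVec, dotProduct]
    _ ≤ (∑ j, (Δ i j)^2) * (∑ j, (k j)^2) := Finset.sum_mul_sq_le_sq_mul_sq _ _ _


/-- The supremum, over all real `m × n` matrices `Δ` with Frobenius norm `‖Δ‖_F ≤ λ`,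
of `‖(G + Δ) k − a‖₂` equals `‖G k − a‖₂ + λ ‖k‖₂`. -/
theorem robust_inner_sup (m n : ℕ) (hm : 0 < m) (hn : 0 < n)
    (G : Matrix (Fin m) (Fin n) ℝ) (a : Fin m → ℝ) (k : Fin n → ℝ)
    (lam : ℝ) (hlam : 0 ≤ lam) :
    sSup {x : ℝ | ∃ Δ : Matrix (Fin m) (Fin n) ℝ, frobeniusNorm Δ ≤ lam ∧
          x = euclNorm ((G + Δ).mulVec k - a)} =
      euclNorm (G.mulVec k - a) + lam * euclNorm k := by
  set r : Fin m → ℝ := G.mulVec k - a with hr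
  set rn := euclNorm r with hrn
  set kn := euclNorm k with hkn
  have hub : ∀ x ∈ {x : ℝ | ∃ Δ : Matrix (Fin m) (Fin n) ℝ, frobeniusNorm Δ ≤ lam ∧
          x = euclNorm ((G + Δ).mulVec k - a)}, x ≤ rn + lam * kn := by
    rintro x ⟨Δ, hΔ, rfl⟩
    have h1 : (G + Δ).mulVec k - a = r + Δ.mulVec k := by
      rw [Matrix.add_mulVec, hr]
      abel
    rw [h1]
    calc euclNorm (r + Δ.mulVec k) ≤ euclNorm r + euclNorm (Δ.mulVec k) := euclNorm_add_le _ _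
      _ ≤ rn + frobeniusNorm Δ * kn := by rw [hrn]; exact add_le_add le_rfl (euclNorm_mulVec_le _ _)
      _ ≤ rn + lam * kn := by
          exact add_le_add le_rfl (mul_le_mul_of_nonneg_right hΔ (euclNorm_nonneg _))
  have hmem : rn + lam * kn ∈ {x : ℝ | ∃ Δ : Matrix (Fin m) (Fin n) ℝ, frobeniusNorm Δ ≤ lam ∧
          x = euclNorm ((G + Δ).mulVec k - a)} := by
    by_cases hk : k = 0
    · refine ⟨0, by simp [frobeniusNorm, hlam], ?_⟩
      have hkn0 : kn = 0 := by simp [hkn, euclNorm, hk]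
      simp [hkn0, hrn, hr]
    · have hSk : 0 < ∑ j, k j ^ 2 := by
        rcases Function.ne_iff.mp hk with ⟨j, hj⟩
        exact Finset.sum_pos' (fun j _ => sq_nonneg _) ⟨j, Finset.mem_univ _, lt_of_le_of_ne (sq_nonneg _) (Ne.symm (pow_ne_zero 2 hj))⟩
      have hknpos : 0 < kn := Real.sqrt_pos.mpr hSk
      have hkn2 : kn ^ 2 = ∑ j, k j ^ 2 := sq_euclNorm k
      -- unit vector u with r = rn • u
      obtain ⟨u, hu1, hu2⟩ : ∃ u : Fin m → ℝ, (∑ i, u i ^ 2 = 1) ∧ ∀ i, r i = rn * u i := by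
        by_cases hrz : rn = 0
        · have hr0 : ∀ i, r i = 0 := by
            intro i
            have hs : (∑ i, r i ^ 2) = 0 :=
              le_antisymm (Real.sqrt_eq_zero'.mp hrz) (Finset.sum_nonneg fun i _ => sq_nonneg _)
            have := (Finset.sum_eq_zero_iff_of_nonneg (fun i _ => sq_nonneg (r i))).mp hs i (Finset.mem_univ i)
            exact pow_eq_zero_iff (two_ne_zero) |>.mp this
          refine ⟨fun i => if i = ⟨0, hm⟩ then 1 else 0, ?_, fun i => by simp [hr0 i, hrz]⟩
          simp [Finset.sum_ite_eq', apply_ite (· ^ 2)]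
        · have hrnpos : 0 < rn := lt_of_le_of_ne (euclNorm_nonneg _) (Ne.symm hrz)
          refine ⟨fun i => r i / rn, ?_, fun i => by field_simp⟩
          have hrn2 : rn ^ 2 = ∑ i, r i ^ 2 := sq_euclNorm r
          simp only [div_pow]
          rw [← Finset.sum_div, ← hrn2, div_self (by positivity)]
      set D : Matrix (Fin m) (Fin n) ℝ := fun i j => lam * kn⁻¹ * (u i * k j) with hD
      refine ⟨D, ?_, ?_⟩
      · have : ∑ i, ∑ j, (lam * kn⁻¹ * (u i * k j)) ^ 2 = lam ^ 2 := by
          have : ∀ i, ∑ j, (lam * kn⁻¹ * (u i * k j)) ^ 2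
              = (lam^2 * kn⁻¹^2 * u i ^2) * (∑ j, k j ^ 2) := by
            intro i
            rw [Finset.mul_sum]
            congr 1 with j
            ring
          simp_rw [this]
          rw [← Finset.sum_mul, ← Finset.mul_sum, hu1, ← hkn2]
          field_simp
        rw [frobeniusNorm]
        simp only [hD]
        rw [this, Real.sqrt_sq hlam]
      · have hmv : ∀ i, (D).mulVec k i
            = lam * kn * u i := by
          intro i
          simp only [Matrix.mulVec, dotProduct, hD]
          have : ∀ j, lam * kn⁻¹ * (u i * k j) * k j = (lam * kn⁻¹ * u i) * (k j ^2) := by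
            intro j; ring
          simp_rw [this]
          rw [← Finset.mul_sum, ← hkn2]
          field_simp
        have hvec : (G + D).mulVec k - a
            = fun i => (rn + lam * kn) * u i := by
          funext i
          have h1 : (G + D).mulVec k i
              = G.mulVec k i + (D).mulVec k i := by
            rw [Matrix.add_mulVec]; rfl
          have h2 : r i = G.mulVec k i - a i := rfl
          simp only [Pi.sub_apply, h1, hmv i]
          have := hu2 i
          rw [h2] at this
          linarith [this]
        rw [hvec]
        have hnn : 0 ≤ rn + lam * kn := add_nonneg (hrn ▸ euclNorm_nonneg r) (mul_nonneg hlam (hkn ▸ euclNorm_nonneg k))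
        rw [euclNorm]
        have : ∑ i, ((rn + lam * kn) * u i) ^ 2 = (rn + lam * kn)^2 := by
          simp_rw [mul_pow]
          rw [← Finset.mul_sum, hu1, mul_one]
        rw [this, Real.sqrt_sq hnn]
  refine le_antisymm (csSup_le ⟨_, hmem⟩ hub) (le_csSup ⟨rn + lam * kn, hub⟩ hmem)
end

section
/- Let Ψ : ℝ^n → ℝ^K be differentiable with the operator norm of its derivative bounded by Γ at every point, let z_1, …, z_M ∈ ℝ^n be data points with ‖Ψ(z_m)‖₂ ≤ Λ for all m, and let δz_1, …, δz_M ∈ ℝ^n be perturbations with ‖δz_m‖₂ ≤ λ for all m. Define the K×K matrix δG = (1/M) Σ_{m=1}^M Ψ(z_m) (Ψ(z_m + δz_m) − Ψ(z_m))ᵀ (outer products of column vectors). Then the Frobenius norm of δG satisfies ‖δG‖_F ≤ λ Λ Γ. -/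
open scoped BigOperators

lemma frob_eq_norm {K : ℕ} (A : Matrix (Fin K) (Fin K) ℝ)
    (x : EuclideanSpace ℝ (Fin K × Fin K)) (hx : ∀ p, x p = A p.1 p.2) :
    frobeniusNorm A = ‖x‖ := by
  rw [EuclideanSpace.norm_eq, frobeniusNorm]
  congr 1
  rw [Fintype.sum_prod_type]
  refine Finset.sum_congr rfl fun i _ => Finset.sum_congr rfl fun j _ => ?_
  rw [hx (i, j), Real.norm_eq_abs, sq_abs]

lemma outer_norm {K : ℕ} (u v : EuclideanSpace ℝ (Fin K))
    (x : EuclideanSpace ℝ (Fin K × Fin K)) (hx : ∀ p, x p = u p.1 * v p.2) :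
    ‖x‖ = ‖u‖ * ‖v‖ := by
  rw [EuclideanSpace.norm_eq, EuclideanSpace.norm_eq u, EuclideanSpace.norm_eq v,
    ← Real.sqrt_mul (by positivity)]
  congr 1
  rw [Finset.sum_mul_sum, Fintype.sum_prod_type]
  refine Finset.sum_congr rfl fun i _ => Finset.sum_congr rfl fun j _ => ?_
  rw [hx (i, j)]
  simp [Real.norm_eq_abs, abs_mul, mul_pow]

/-- If `Ψ : ℝ^n → ℝ^K` is differentiable with derivative bounded in operator norm by `Γ`,
the data points satisfy `‖Ψ(z_m)‖₂ ≤ Λ` and the perturbations satisfy `‖δz_m‖₂ ≤ λ`, then the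
perturbation `δG = (1/M) ∑ₘ Ψ(z_m) (Ψ(z_m + δz_m) − Ψ(z_m))ᵀ` of the Gram-type matrix
satisfies `‖δG‖_F ≤ λ Λ Γ`. -/
theorem deltaG_frobenius_bound (n K M : ℕ) (hK : 0 < K) (hM : 0 < M)
    (Ψ : EuclideanSpace ℝ (Fin n) → EuclideanSpace ℝ (Fin K))
    (Γ Λ lam : ℝ)
    (hdiff : Differentiable ℝ Ψ)
    (hΓ : ∀ z : EuclideanSpace ℝ (Fin n), ‖fderiv ℝ Ψ z‖ ≤ Γ)
    (z δz : Fin M → EuclideanSpace ℝ (Fin n))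
    (hΛ : ∀ m, ‖Ψ (z m)‖ ≤ Λ)
    (hlam : ∀ m, ‖δz m‖ ≤ lam) :
    frobeniusNorm (Matrix.of fun i j : Fin K =>
        (1 / (M : ℝ)) * ∑ m : Fin M, Ψ (z m) i * (Ψ (z m + δz m) j - Ψ (z m) j)) ≤
      lam * Λ * Γ := by
  have hΓ0 : 0 ≤ Γ := le_trans (norm_nonneg _) (hΓ 0)
  obtain ⟨m0⟩ : Nonempty (Fin M) := ⟨⟨0, hM⟩⟩
  have hΛ0 : 0 ≤ Λ := le_trans (norm_nonneg _) (hΛ m0)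
  have hlam0 : 0 ≤ lam := le_trans (norm_nonneg _) (hlam m0)
  -- mean value bound
  have hmv : ∀ m : Fin M, ‖Ψ (z m + δz m) - Ψ (z m)‖ ≤ Γ * lam := by
    intro m
    have h := Convex.norm_image_sub_le_of_norm_fderiv_le
      (fun x _ => (hdiff x)) (fun x _ => hΓ x) convex_univ
      (Set.mem_univ (z m)) (Set.mem_univ (z m + δz m))
    calc ‖Ψ (z m + δz m) - Ψ (z m)‖ ≤ Γ * ‖z m + δz m - z m‖ := h
      _ = Γ * ‖δz m‖ := by rw [add_sub_cancel_left]
      _ ≤ Γ * lam := mul_le_mul_of_nonneg_left (hlam m) hΓ0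
  -- the outer-product vectors
  have hw : ∀ m : Fin M, ∃ w : EuclideanSpace ℝ (Fin K × Fin K),
      (∀ p, w p = Ψ (z m) p.1 * (Ψ (z m + δz m) - Ψ (z m)) p.2) ∧
      ‖w‖ ≤ Λ * (Γ * lam) := by
    intro m
    refine ⟨WithLp.toLp 2 (fun p : Fin K × Fin K => Ψ (z m) p.1 * (Ψ (z m + δz m) - Ψ (z m)) p.2), fun p => rfl, ?_⟩
    rw [outer_norm (Ψ (z m)) (Ψ (z m + δz m) - Ψ (z m)) _ (fun p => rfl)]
    exact mul_le_mul (hΛ m) (hmv m) (norm_nonneg _) hΛ0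
  choose w hwp hwn using hw
  -- identify the matrix-as-vector with the scaled sum
  obtain ⟨x, hx⟩ : ∃ x : EuclideanSpace ℝ (Fin K × Fin K),
      x = (1 / (M : ℝ)) • ∑ m : Fin M, w m := ⟨_, rfl⟩
  have hxp : ∀ p : Fin K × Fin K, x p = (Matrix.of fun i j : Fin K =>
      (1 / (M : ℝ)) * ∑ m : Fin M, Ψ (z m) i * (Ψ (z m + δz m) j - Ψ (z m) j)) p.1 p.2 := by
    intro p
    have hs : (∑ m : Fin M, w m) p = ∑ m : Fin M, w m p :=
      by rw [WithLp.ofLp_sum, Finset.sum_apply]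
    rw [hx]
    simp only [PiLp.smul_apply, smul_eq_mul, hs, Matrix.of_apply]
    congr 1
    apply Finset.sum_congr rfl
    intro m _
    rw [hwp m p]
    simp [PiLp.sub_apply]
  rw [frob_eq_norm _ x (fun p => hxp p), hx, norm_smul]
  have hsum : ‖∑ m : Fin M, w m‖ ≤ ∑ m : Fin M, ‖w m‖ := norm_sum_le _ _
  have hsum2 : ∑ m : Fin M, ‖w m‖ ≤ (M : ℝ) * (Λ * (Γ * lam)) := by
    calc ∑ m : Fin M, ‖w m‖ ≤ ∑ _m : Fin M, (Λ * (Γ * lam)) :=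
          Finset.sum_le_sum fun m _ => hwn m
      _ = (M : ℝ) * (Λ * (Γ * lam)) := by
          rw [Finset.sum_const, Finset.card_univ, Fintype.card_fin]; ring
  have hMn : (0:ℝ) < M := Nat.cast_pos.mpr hM
  have h1 : ‖(1 / (M : ℝ))‖ = 1 / (M : ℝ) := by
    rw [Real.norm_eq_abs, abs_of_nonneg (by positivity)]
  rw [h1]
  calc (1 / (M : ℝ)) * ‖∑ m : Fin M, w m‖
      ≤ (1 / (M:ℝ)) * ((M : ℝ) * (Λ * (Γ * lam))) := by
        apply mul_le_mul_of_nonneg_left (le_trans hsum hsum2) (by positivity)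
    _ = lam * Λ * Γ := by field_simp
end

section
/- Let S be a symmetric positive definite real n×n matrix, B a real p×n matrix, and σ > 0. Then det(B S Bᵀ + σ² I_p) ≥ σ^{2p}, with equality if and only if B = 0. Consequently, the quantity (1/2) log ( det(B S Bᵀ + σ² I_p) / σ^{2p} ) is nonnegative, and it equals zero if and only if B = 0. -/
open Matrix
open scoped MatrixOrder

lemma aux_det_add_smul_one {p : ℕ} {M : Matrix (Fin p) (Fin p) ℝ} (hM : M.PosSemidef)
    (c : ℝ) : (M + c • (1 : Matrix (Fin p) (Fin p) ℝ)).det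
      = ∏ i, (hM.1.eigenvalues i + c) := by
  have hU := hM.1.spectral_theorem
  set U : Matrix (Fin p) (Fin p) ℝ := (hM.1.eigenvectorUnitary : Matrix (Fin p) (Fin p) ℝ)
    with hUdef
  have hUU : U * star U = 1 := (Matrix.mem_unitaryGroup_iff).mp hM.1.eigenvectorUnitary.2
  have key : M + c • (1 : Matrix (Fin p) (Fin p) ℝ)
      = U * (diagonal (fun i => hM.1.eigenvalues i + c)) * star U := by
    have h1 : (diagonal (fun i => hM.1.eigenvalues i + c))
        = diagonal (RCLike.ofReal ∘ hM.1.eigenvalues) + c • 1 := by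
      rw [← diagonal_one, ← diagonal_smul, ← diagonal_add]
      funext i j
      simp [Matrix.diagonal, Matrix.one_apply]
    rw [h1, mul_add, add_mul]
    simp only [Unitary.conjStarAlgAut_apply, Unitary.coe_star] at hU
    rw [← hU]
    rw [mul_smul_comm, smul_mul_assoc, mul_one, hUU]
  rw [key, det_mul, det_mul, det_diagonal, mul_comm, ← mul_assoc, ← det_mul]
  rw [show star U * U = 1 from mul_eq_one_comm.mp hUU, det_one, one_mul]

/-- For a symmetric positive definite `S`, a `p × n` matrix `B` and `σ > 0`, one has
`det(B S Bᵀ + σ² I) ≥ σ^(2p)` with equality iff `B = 0`; hence the information transfer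
`(1/2) log (det(B S Bᵀ + σ² I) / σ^(2p))` is nonnegative and vanishes iff `B = 0`. -/
theorem information_transfer_zero_iff (n p : ℕ) (hn : 0 < n) (hp : 0 < p)
    (S : Matrix (Fin n) (Fin n) ℝ) (hS : S.PosDef)
    (B : Matrix (Fin p) (Fin n) ℝ) (σ : ℝ) (hσ : 0 < σ) :
    σ ^ (2 * p) ≤ (B * S * Bᵀ + σ ^ 2 • (1 : Matrix (Fin p) (Fin p) ℝ)).det ∧
    ((B * S * Bᵀ + σ ^ 2 • (1 : Matrix (Fin p) (Fin p) ℝ)).det = σ ^ (2 * p) ↔ B = 0) ∧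
    0 ≤ (1 / 2 : ℝ) * Real.log
        ((B * S * Bᵀ + σ ^ 2 • (1 : Matrix (Fin p) (Fin p) ℝ)).det / σ ^ (2 * p)) ∧
    ((1 / 2 : ℝ) * Real.log
        ((B * S * Bᵀ + σ ^ 2 • (1 : Matrix (Fin p) (Fin p) ℝ)).det / σ ^ (2 * p)) = 0 ↔
      B = 0) := by
  have hBt : Bᵀ = Bᴴ := (conjTranspose_eq_transpose_of_trivial B).symm
  have hM : (B * S * Bᵀ).PosSemidef := by
    rw [hBt]; exact hS.posSemidef.mul_mul_conjTranspose_same B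
  set M := B * S * Bᵀ with hMdef
  have hσ2 : (0:ℝ) < σ ^ 2 := by positivity
  have hdet := aux_det_add_smul_one hM (σ ^ 2)
  have hpow : σ ^ (2 * p) = ∏ _i : Fin p, σ ^ 2 := by
    simp [Finset.prod_const, ← pow_mul]
  have hle : σ ^ (2 * p) ≤ (M + σ ^ 2 • 1).det := by
    rw [hdet, hpow]
    exact Finset.prod_le_prod (fun i _ => le_of_lt hσ2)
      (fun i _ => le_add_of_nonneg_left (hM.eigenvalues_nonneg i))
  -- B = 0 → det = σ^(2p)
  have hB0 : B = 0 → (M + σ ^ 2 • 1).det = σ ^ (2 * p) := by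
    intro hB
    have : M = 0 := by rw [hMdef, hB]; simp
    rw [this, zero_add, det_smul, det_one, mul_one, Fintype.card_fin, ← pow_mul]
  -- det = σ^(2p) → B = 0
  have heqB : (M + σ ^ 2 • 1).det = σ ^ (2 * p) → B = 0 := by
    intro h
    have hall : ∀ i, hM.1.eigenvalues i = 0 := by
      by_contra hne
      push_neg at hne
      obtain ⟨j, hj⟩ := hne
      have hjpos : 0 < hM.1.eigenvalues j := lt_of_le_of_ne (hM.eigenvalues_nonneg j) (Ne.symm hj)
      have : σ ^ (2 * p) < (M + σ ^ 2 • 1).det := by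
        rw [hdet, hpow]
        exact Finset.prod_lt_prod (fun i _ => hσ2)
          (fun i _ => le_add_of_nonneg_left (hM.eigenvalues_nonneg i))
          ⟨j, Finset.mem_univ j, by linarith⟩
      linarith
    have hM0 : M = 0 := by
      have hspec := hM.1.spectral_theorem
      have : (RCLike.ofReal ∘ hM.1.eigenvalues : Fin p → ℝ) = fun _ => 0 := by
        funext i; simp [hall i]
      rw [this] at hspec
      simpa using hspec
    -- M = 0 → B = 0 via sqrt of S
    have hR := hS.posSemidef
    have hsq : (CFC.sqrt S) * (CFC.sqrt S) = S := CFC.sqrt_mul_sqrt_self S hR.nonneg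
    have hherm : (CFC.sqrt S).IsHermitian := (CFC.sqrt_nonneg S).posSemidef.1
    have hz : (B * (CFC.sqrt S)) * (B * (CFC.sqrt S))ᴴ = 0 := by
      rw [conjTranspose_mul, hherm.eq]
      calc B * (CFC.sqrt S) * ((CFC.sqrt S) * Bᴴ) = B * ((CFC.sqrt S) * (CFC.sqrt S)) * Bᴴ := by
            rw [Matrix.mul_assoc, Matrix.mul_assoc, Matrix.mul_assoc]
        _ = M := by rw [hsq, hMdef, hBt]
        _ = 0 := hM0
    have hBs : B * (CFC.sqrt S) = 0 := self_mul_conjTranspose_eq_zero.mp hz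
    have hdetS : (CFC.sqrt S).det ≠ 0 := by
      intro hd
      have : S.det = 0 := by rw [← hsq, det_mul, hd, mul_zero]
      exact (ne_of_gt hS.det_pos) this
    have hunit : IsUnit (CFC.sqrt S).det := isUnit_iff_ne_zero.mpr hdetS
    calc B = B * ((CFC.sqrt S) * (CFC.sqrt S)⁻¹) := by rw [mul_nonsing_inv _ hunit, Matrix.mul_one]
      _ = (B * (CFC.sqrt S)) * (CFC.sqrt S)⁻¹ := by rw [Matrix.mul_assoc]
      _ = 0 := by rw [hBs, Matrix.zero_mul]
  have hppos : (0:ℝ) < σ ^ (2 * p) := by positivity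
  have hratio : 1 ≤ (M + σ ^ 2 • 1).det / σ ^ (2 * p) :=
    (one_le_div hppos).mpr hle
  refine ⟨hle, ⟨heqB, hB0⟩, ?_, ?_⟩
  · have := Real.log_nonneg hratio
    linarith
  · constructor
    · intro h
      have hlog : Real.log ((M + σ ^ 2 • 1).det / σ ^ (2 * p)) = 0 := by linarith
      rcases Real.log_eq_zero.mp hlog with h1 | h1 | h1
      · linarith
      · apply heqB
        field_simp at h1
        linarith [h1]
      · linarith
    · intro hB
      rw [hB0 hB, div_self (ne_of_gt hppos), Real.log_one, mul_zero]
end
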